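/- Define ψ(x, μ) := x·exp(μ·√(2·ln(1+x))) for x, μ ∈ [0, ∞). Then for all x₁, x₂, μ ∈ [0, ∞): ψ(x₁ + x₂, μ) ≤ (1/2)·ψ(2, μ)·( ψ(x₁, μ) + ψ(x₂, μ) ). -/

import Mathlib

/-- `ψ(x, μ) = x·exp(μ·√(2·ln(1+x)))`. -/
noncomputable def psi (x μ : ℝ) : ℝ := x * Real.exp (μ * Real.sqrt (2 * Real.log (1 + x)))

lemma psi_convex (μ : ℝ) (hμ : 0 ≤ μ) :
    ConvexOn ℝ (Set.Ici 0) (fun x => psi x μ) := by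
  have hint : interior (Set.Ici (0:ℝ)) = Set.Ioi 0 := interior_Ici
  set g : ℝ → ℝ := fun x => Real.sqrt (2 * Real.log (1 + x)) with hgdef
  have key : ∀ x : ℝ, 0 < x →
      (0:ℝ) < 1 + x ∧ 0 < 2 * Real.log (1+x) ∧ 0 < g x := by
    intro x hx
    have hx1 : (0:ℝ) < 1 + x := by linarith
    have hL : 0 < 2 * Real.log (1+x) := by
      have := Real.log_pos (by linarith : (1:ℝ) < 1 + x); linarith
    exact ⟨hx1, hL, Real.sqrt_pos.mpr hL⟩
  have hgd : ∀ x : ℝ, 0 < x →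
      HasDerivAt g (2 * (1/(1+x)) / (2 * g x)) x := by
    intro x hx
    obtain ⟨hx1, hL, hg0⟩ := key x hx
    have h1 : HasDerivAt (fun y : ℝ => 1 + y) 1 x := (hasDerivAt_id x).const_add 1
    have h2 : HasDerivAt (fun y : ℝ => Real.log (1+y)) (1/(1+x)) x := by
      simpa using h1.log hx1.ne'
    exact ((h2.const_mul 2).sqrt hL.ne')
  have hE : ∀ x : ℝ, 0 < x →
      HasDerivAt (fun y => Real.exp (μ * g y))
        (Real.exp (μ * g x) * (μ * (2 * (1/(1+x)) / (2 * g x)))) x := by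
    intro x hx
    exact ((hgd x hx).const_mul μ).exp
  refine convexOn_of_hasDerivWithinAt2_nonneg (convex_Ici 0)
    (f' := fun x => Real.exp (μ * g x) * (1 + μ * x / ((1 + x) * g x)))
    (f'' := fun x => (Real.exp (μ * g x) * (μ * (2 * (1/(1+x)) / (2 * g x)))) *
        (1 + μ * x / ((1 + x) * g x)) +
      Real.exp (μ * g x) *
        ((μ * 1 * ((1+x) * g x) - μ * x * (1 * g x + (1+x) * (2 * (1/(1+x)) / (2 * g x))))
          / ((1+x) * g x)^2))
    ?_ ?_ ?_ ?_
  · -- continuity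
    intro x hx
    have hx0 : (0:ℝ) ≤ x := hx
    have hne : (1:ℝ) + x ≠ 0 := by positivity
    apply ContinuousAt.continuousWithinAt
    simp only [psi]
    have hlogc : ContinuousAt (fun y : ℝ => Real.log (1+y)) x :=
      ContinuousAt.log (by fun_prop) hne
    exact continuousAt_id.mul
      (Real.continuous_exp.continuousAt.comp
        (continuousAt_const.mul
          (Real.continuous_sqrt.continuousAt.comp (continuousAt_const.mul hlogc))))
  · -- first derivative
    intro x hx
    rw [hint] at hx
    obtain ⟨hx1, hL, hg0⟩ := key x hx
    have hpsi : HasDerivAt (fun y => psi y μ)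
        (1 * Real.exp (μ * g x) + x * (Real.exp (μ * g x) * (μ * (2 * (1/(1+x)) / (2 * g x))))) x := by
      exact (hasDerivAt_id x).mul (hE x hx)
    have heq : 1 * Real.exp (μ * g x) + x * (Real.exp (μ * g x) * (μ * (2 * (1/(1+x)) / (2 * g x))))
        = Real.exp (μ * g x) * (1 + μ * x / ((1 + x) * g x)) := by
      field_simp
    show HasDerivWithinAt (fun x => psi x μ)
      (Real.exp (μ * g x) * (1 + μ * x / ((1 + x) * g x))) (interior (Set.Ici 0)) x
    rw [← heq]
    exact hpsi.hasDerivWithinAt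
  · -- second derivative
    intro x hx
    rw [hint] at hx
    obtain ⟨hx1, hL, hg0⟩ := key x hx
    have hden : HasDerivAt (fun y => (1+y) * g y)
        (1 * g x + (1+x) * (2 * (1/(1+x)) / (2 * g x))) x :=
      (((hasDerivAt_id x).const_add 1).mul (hgd x hx))
    have hdne : (1+x) * g x ≠ 0 := by positivity
    have hnum : HasDerivAt (fun y : ℝ => μ * y) μ x := by
      simpa using (hasDerivAt_id x).const_mul μ
    have hD : HasDerivAt (fun y => μ * y / ((1+y) * g y))
        ((μ * 1 * ((1+x) * g x) - μ * x * (1 * g x + (1+x) * (2 * (1/(1+x)) / (2 * g x))))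
          / ((1+x) * g x)^2) x := by
      have := (by simpa using (hasDerivAt_id x).const_mul μ :
        HasDerivAt (fun y : ℝ => μ * y) (μ * 1) x)
      exact this.div hden hdne
    have hA : HasDerivAt (fun y => 1 + μ * y / ((1+y) * g y))
        ((μ * 1 * ((1+x) * g x) - μ * x * (1 * g x + (1+x) * (2 * (1/(1+x)) / (2 * g x))))
          / ((1+x) * g x)^2) x := hD.const_add 1
    exact ((hE x hx).mul hA).hasDerivWithinAt
  · -- nonnegativity
    intro x hx
    rw [hint] at hx
    obtain ⟨hx1, hL, hg0⟩ := key x hx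
    set s := g x with hs
    have hs2 : s^2 = 2 * Real.log (1+x) := Real.sq_sqrt hL.le
    have hlog : x / (1+x) ≤ Real.log (1+x) := by
      have h := Real.one_sub_inv_le_log_of_pos hx1
      have : 1 - (1+x)⁻¹ = x / (1+x) := by field_simp; ring
      linarith [this ▸ h]
    have hE0 : (0:ℝ) < Real.exp (μ * s) := Real.exp_pos _
    show (0:ℝ) ≤ (Real.exp (μ * s) * (μ * (2 * (1/(1+x)) / (2 * s)))) *
        (1 + μ * x / ((1 + x) * s)) +
      Real.exp (μ * s) *
        ((μ * 1 * ((1+x) * s) - μ * x * (1 * s + (1+x) * (2 * (1/(1+x)) / (2 * s))))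
          / ((1+x) * s)^2)
    have heq : (Real.exp (μ * s) * (μ * (2 * (1/(1+x)) / (2 * s)))) * (1 + μ * x / ((1 + x) * s)) +
      Real.exp (μ * s) *
        ((μ * 1 * ((1+x) * s) - μ * x * (1 * s + (1+x) * (2 * (1/(1+x)) / (2 * s))))
          / ((1+x) * s)^2)
        = Real.exp (μ * s) * μ * (((2+x) * s^2 + μ * x * s - x) / ((1+x)^2 * s^3)) := by
      field_simp
      ring
    rw [heq]
    apply mul_nonneg (mul_nonneg hE0.le hμ)
    apply div_nonneg _ (mul_nonneg (sq_nonneg (1+x)) (pow_nonneg hg0.le 3))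
    have hx0 : (0:ℝ) < x := hx
    have hnum : 0 ≤ (2+x) * s^2 - x := by
      have h1 : 2 * (2+x) * (x / (1+x)) - x = x * (3+x) / (1+x) := by field_simp; ring
      have h2 : 0 ≤ x * (3+x) / (1+x) := div_nonneg (by nlinarith) (by linarith)
      nlinarith [mul_le_mul_of_nonneg_left hlog (by nlinarith : (0:ℝ) ≤ 2 * (2+x))]
    nlinarith [mul_nonneg (mul_nonneg hμ hx0.le) hg0.le]

lemma psi_two_mul (x μ : ℝ) (hx : 0 ≤ x) (hμ : 0 ≤ μ) :
    psi (2*x) μ ≤ psi 2 μ * psi x μ := by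
  have hx1 : (0:ℝ) < 1 + x := by linarith
  have ha : (0:ℝ) ≤ 2 * Real.log 3 := by
    have := Real.log_pos (by norm_num : (1:ℝ) < 3); linarith
  have hb : (0:ℝ) ≤ 2 * Real.log (1+x) := by
    have := Real.log_nonneg (by linarith : (1:ℝ) ≤ 1 + x); linarith
  have hsq : Real.sqrt (2*Real.log (1+2*x))
      ≤ Real.sqrt (2*Real.log 3) + Real.sqrt (2*Real.log (1+x)) := by
    have hlog : Real.log (1+2*x) ≤ Real.log 3 + Real.log (1+x) := by
      rw [← Real.log_mul (by norm_num) (by linarith)]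
      exact Real.log_le_log (by linarith) (by nlinarith)
    have hsum : 2*Real.log 3 + 2*Real.log (1+x)
        ≤ (Real.sqrt (2*Real.log 3) + Real.sqrt (2*Real.log (1+x)))^2 := by
      nlinarith [Real.sq_sqrt ha, Real.sq_sqrt hb, Real.sqrt_nonneg (2*Real.log 3),
        Real.sqrt_nonneg (2*Real.log (1+x))]
    calc Real.sqrt (2*Real.log (1+2*x))
        ≤ Real.sqrt ((Real.sqrt (2*Real.log 3) + Real.sqrt (2*Real.log (1+x)))^2) :=
          Real.sqrt_le_sqrt (by linarith)
      _ = Real.sqrt (2*Real.log 3) + Real.sqrt (2*Real.log (1+x)) :=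
          Real.sqrt_sq (by positivity)
  have hexp : Real.exp (μ * Real.sqrt (2*Real.log (1+2*x)))
      ≤ Real.exp (μ * (Real.sqrt (2*Real.log 3) + Real.sqrt (2*Real.log (1+x)))) :=
    Real.exp_le_exp.mpr (mul_le_mul_of_nonneg_left hsq hμ)
  calc psi (2*x) μ = (2*x) * Real.exp (μ * Real.sqrt (2*Real.log (1+2*x))) := rfl
    _ ≤ (2*x) * Real.exp (μ * (Real.sqrt (2*Real.log 3) + Real.sqrt (2*Real.log (1+x)))) :=
        mul_le_mul_of_nonneg_left hexp (by linarith)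
    _ = psi 2 μ * psi x μ := by
        simp only [psi, mul_add, Real.exp_add]
        norm_num
        ring

/-- Lemma 2.6, part (iv): for all `x₁, x₂, μ ≥ 0`,
`ψ(x₁ + x₂, μ) ≤ (1/2)·ψ(2, μ)·(ψ(x₁, μ) + ψ(x₂, μ))`. -/
theorem stmt_6 (x₁ x₂ μ : ℝ) (hx₁ : 0 ≤ x₁) (hx₂ : 0 ≤ x₂) (hμ : 0 ≤ μ) :
    psi (x₁ + x₂) μ ≤ 1 / 2 * psi 2 μ * (psi x₁ μ + psi x₂ μ) := by
  have hconv := psi_convex μ hμ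
  have h := hconv.2 (Set.mem_Ici.mpr (by linarith : (0:ℝ) ≤ 2*x₁))
    (Set.mem_Ici.mpr (by linarith : (0:ℝ) ≤ 2*x₂))
    (by norm_num : (0:ℝ) ≤ 1/2) (by norm_num : (0:ℝ) ≤ 1/2) (by norm_num)
  simp only [smul_eq_mul] at h
  rw [show (1/2 : ℝ) * (2*x₁) + 1/2 * (2*x₂) = x₁ + x₂ by ring] at h
  have h1 := psi_two_mul x₁ μ hx₁ hμ
  have h2 := psi_two_mul x₂ μ hx₂ hμ
  linarith
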